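/- Assume a(s)/e^{2γs} → a_∞ and f(s)/s^p → f_∞ as s → +∞ with γ, p, a_∞, f_∞ > 0. Then for every r ∈ ℝ with f(r) > 0 and f ≥ 0 on (r,∞), the integral ∫_{g⁻¹(r)}^{+∞} ds/√(F(g(s))) diverges, where F(t) = ∫_r^t f. -/

import Mathlib

open Filter Topology MeasureTheory

theorem stmt_8 (a f g ginv : ℝ → ℝ) (ha : ContDiff ℝ 1 a) (ν : ℝ) (hν : 0 < ν)
    (hab : ∀ s, ν ≤ a s) (hf : ContDiff ℝ 1 f)
    (hg : ∀ s, HasDerivAt g (1 / Real.sqrt (a (g s))) s) (hg0 : g 0 = 0)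
    (hinv1 : ∀ s, ginv (g s) = s) (hinv2 : ∀ t, g (ginv t) = t)
    (γ p aInf fInf : ℝ) (hγ : 0 < γ) (hp : 0 < p) (haInf : 0 < aInf) (hfInf : 0 < fInf)
    (haAsym : Tendsto (fun s => a s / Real.exp (2 * γ * s)) atTop (𝓝 aInf))
    (hfAsym : Tendsto (fun s => f s / s ^ p) atTop (𝓝 fInf)) :
    ∀ r : ℝ, 0 < f r → (∀ s, r < s → 0 ≤ f s) →
      ¬ IntegrableOn (fun s => 1 / Real.sqrt (∫ τ in r..(g s), f τ))
        (Set.Ici (ginv r)) := by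
  intro r hr hrf H
  have hfc : Continuous f := hf.continuous
  have hapos : ∀ t, 0 < a t := fun t => lt_of_lt_of_le hν (hab t)
  have hsq : ∀ t, 0 < Real.sqrt (a t) := fun t => Real.sqrt_pos.2 (hapos t)
  -- g is strictly monotone
  have hgmono : StrictMono g := by
    apply strictMono_of_deriv_pos
    intro x
    rw [(hg x).deriv]
    exact div_pos one_pos (hsq _)
  -- global exponential lower bound on a
  obtain ⟨T₂, hT₂⟩ :=
    eventually_atTop.1 (haAsym.eventually_const_le (by linarith : aInf / 2 < aInf))
  set c : ℝ := min (aInf / 2) (ν * Real.exp (-(2 * γ * T₂))) with hcdef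
  have hc : 0 < c := lt_min (by linarith) (by positivity)
  have hca : ∀ t, c * Real.exp (2 * γ * t) ≤ a t := by
    intro t
    rcases le_or_gt T₂ t with h | h
    · have h1 := hT₂ t h
      rw [le_div_iff₀ (Real.exp_pos _)] at h1
      calc c * Real.exp (2 * γ * t) ≤ aInf / 2 * Real.exp (2 * γ * t) :=
            mul_le_mul_of_nonneg_right (min_le_left _ _) (Real.exp_pos _).le
        _ ≤ a t := h1
    · have h2 : ν * Real.exp (-(2 * γ * T₂)) * Real.exp (2 * γ * t) ≤ ν := by
        rw [mul_assoc, ← Real.exp_add]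
        have h3 : Real.exp (-(2 * γ * T₂) + 2 * γ * t) ≤ 1 := by
          rw [Real.exp_le_one_iff]
          nlinarith
        nlinarith [Real.exp_pos (-(2 * γ * T₂) + 2 * γ * t)]
      calc c * Real.exp (2 * γ * t) ≤ ν * Real.exp (-(2 * γ * T₂)) * Real.exp (2 * γ * t) :=
            mul_le_mul_of_nonneg_right (min_le_right _ _) (Real.exp_pos _).le
        _ ≤ ν := h2
        _ ≤ a t := hab t
  have hsqa : ∀ t, Real.sqrt c * Real.exp (γ * t) ≤ Real.sqrt (a t) := by
    intro t
    have h3 : Real.sqrt (c * Real.exp (2 * γ * t)) = Real.sqrt c * Real.exp (γ * t) := by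
      rw [Real.sqrt_mul hc.le, show 2 * γ * t = γ * t + γ * t by ring, Real.exp_add,
        Real.sqrt_mul_self (Real.exp_pos _).le]
    rw [← h3]
    exact Real.sqrt_le_sqrt (hca t)
  -- eventual exponential upper bound on f
  have hfe : ∀ᶠ t in atTop, f t ≤ (fInf + 1) * Real.exp (γ * t) := by
    have e1 : ∀ᶠ t in atTop, f t / t ^ p ≤ fInf + 1 :=
      hfAsym.eventually_le_const (by linarith)
    have e2 : ∀ᶠ t : ℝ in atTop, t ^ p * Real.exp (-γ * t) ≤ 1 :=
      (tendsto_rpow_mul_exp_neg_mul_atTop_nhds_zero p γ hγ).eventually_le_const one_pos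
    filter_upwards [e1, e2, eventually_gt_atTop (0 : ℝ)] with t h1 h2 ht
    have hpt : (0 : ℝ) < t ^ p := Real.rpow_pos_of_pos ht p
    have h4 : f t ≤ (fInf + 1) * t ^ p := by
      rw [div_le_iff₀ hpt] at h1; linarith
    have h5 : t ^ p ≤ Real.exp (γ * t) := by
      have h6 := mul_le_mul_of_nonneg_right h2 (Real.exp_pos (γ * t)).le
      rw [one_mul, mul_assoc, ← Real.exp_add] at h6
      have h7 : -γ * t + γ * t = 0 := by ring
      rw [h7, Real.exp_zero, mul_one] at h6
      exact h6
    calc f t ≤ (fInf + 1) * t ^ p := h4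
      _ ≤ (fInf + 1) * Real.exp (γ * t) := mul_le_mul_of_nonneg_left h5 (by linarith)
  obtain ⟨T₃, hT₃⟩ := eventually_atTop.1 hfe
  set Y : ℝ := max T₃ (r + 1) with hYdef
  set S₀ : ℝ := ginv Y with hS₀def
  have hgS₀ : g S₀ = Y := hinv2 Y
  have hgbig : ∀ s, S₀ ≤ s → Y ≤ g s := by
    intro s hs
    rw [← hgS₀]
    exact hgmono.monotone hs
  -- derivative of the primitive composed with g
  have hF : ∀ s : ℝ, HasDerivAt (fun u => ∫ τ in r..u, f τ) (f s) s := fun s =>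
    intervalIntegral.integral_hasDerivAt_right (hfc.intervalIntegrable _ _)
      (hfc.stronglyMeasurableAtFilter _ _) hfc.continuousAt
  have hψ : ∀ s : ℝ, HasDerivAt (fun s => ∫ τ in r..(g s), f τ)
      (f (g s) * (1 / Real.sqrt (a (g s)))) s := fun s => (hF (g s)).comp s (hg s)
  set C : ℝ := (fInf + 1) / Real.sqrt c with hCdef
  have hsc : 0 < Real.sqrt c := Real.sqrt_pos.2 hc
  have hC : 0 < C := div_pos (by linarith) hsc
  have hderivle : ∀ s, Y ≤ g s → f (g s) * (1 / Real.sqrt (a (g s))) ≤ C := by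
    intro s hYs
    have h5 : f (g s) ≤ (fInf + 1) * Real.exp (γ * g s) :=
      hT₃ (g s) (le_trans (le_max_left _ _) hYs)
    have h6 : 0 < Real.sqrt c * Real.exp (γ * g s) := by positivity
    have hEne : Real.exp (γ * g s) ≠ 0 := (Real.exp_pos _).ne'
    rw [mul_one_div]
    calc f (g s) / Real.sqrt (a (g s))
        ≤ (fInf + 1) * Real.exp (γ * g s) / (Real.sqrt c * Real.exp (γ * g s)) :=
          div_le_div₀ (mul_nonneg (by linarith) (Real.exp_pos _).le) h5 h6 (hsqa (g s))
      _ = C := by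
          rw [hCdef]
          field_simp
  -- linear growth of the inner integral
  have hcont : Continuous fun s => ∫ τ in r..(g s), f τ :=
    continuous_iff_continuousAt.2 fun s => (hψ s).differentiableAt.continuousAt
  have hmono : MonotoneOn (fun s => C * s - ∫ τ in r..(g s), f τ) (Set.Ici S₀) := by
    apply monotoneOn_of_deriv_nonneg (convex_Ici S₀)
    · exact ((continuous_const.mul continuous_id).sub hcont).continuousOn
    · intro x _
      exact (((hasDerivAt_id x).const_mul C).sub (hψ x)).differentiableAt.differentiableWithinAt
    · intro x hx
      rw [interior_Ici] at hx
      have hd : HasDerivAt (fun s => C * s - ∫ τ in r..(g s), f τ)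
          (C * 1 - f (g x) * (1 / Real.sqrt (a (g x)))) x :=
        ((hasDerivAt_id x).const_mul C).sub (hψ x)
      rw [hd.deriv]
      have := hderivle x (hgbig x (le_of_lt hx))
      linarith
  have hlin : ∀ s, S₀ ≤ s →
      (∫ τ in r..(g s), f τ) ≤ C * s + ((∫ τ in r..(g S₀), f τ) - C * S₀) := by
    intro s hs
    have h1 := hmono Set.self_mem_Ici (Set.mem_Ici.2 hs) hs
    dsimp only at h1
    linarith
  -- positivity of the inner integral
  have h6 : f ⁻¹' Set.Ioi 0 ∈ 𝓝 r :=
    (hfc.continuousAt : ContinuousAt f r).preimage_mem_nhds (Ioi_mem_nhds hr)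
  obtain ⟨δ, hδ, hball⟩ := Metric.mem_nhds_iff.1 h6
  set ε : ℝ := min (δ / 2) 1 with hεdef
  have hεpos : 0 < ε := lt_min (by linarith) one_pos
  have hε1 : ε ≤ 1 := min_le_right _ _
  have hεδ : ε ≤ δ / 2 := min_le_left _ _
  have hFpos : ∀ x, r + 1 ≤ x → 0 < ∫ τ in r..x, f τ := by
    intro x hx
    have hrx : r + ε ≤ x := by linarith
    have hsplit : (∫ τ in r..(r + ε), f τ) + (∫ τ in (r + ε)..x, f τ) = ∫ τ in r..x, f τ :=
      intervalIntegral.integral_add_adjacent_intervals (hfc.intervalIntegrable _ _)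
        (hfc.intervalIntegrable _ _)
    rw [← hsplit]
    have hpos1 : 0 < ∫ τ in r..(r + ε), f τ := by
      apply intervalIntegral.intervalIntegral_pos_of_pos_on (hfc.intervalIntegrable _ _)
      · intro t ht
        have htball : t ∈ Metric.ball r δ := by
          rw [Metric.mem_ball, Real.dist_eq, abs_lt]
          constructor
          · linarith [ht.1]
          · linarith [ht.2]
        exact hball htball
      · linarith
    have hpos2 : 0 ≤ ∫ τ in (r + ε)..x, f τ := by
      apply intervalIntegral.integral_nonneg (by linarith)
      intro u hu
      exact hrf u (by linarith [hu.1])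
    linarith
  -- final comparison
  set E : ℝ := (∫ τ in r..(g S₀), f τ) - C * S₀ with hEdef
  set S₁ : ℝ := max S₀ (max 1 (C + |E| + 1)) with hS₁def
  have hS₁S₀ : S₀ ≤ S₁ := le_max_left _ _
  have hS₁1 : (1 : ℝ) ≤ S₁ := le_trans (le_max_left _ _) (le_max_right _ _)
  have hS₁E : C + |E| + 1 ≤ S₁ := le_trans (le_max_right _ _) (le_max_right _ _)
  have hkey : ∀ s, S₁ ≤ s → s⁻¹ ≤ 1 / Real.sqrt (∫ τ in r..(g s), f τ) := by
    intro s hs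
    have hsS₀ : S₀ ≤ s := le_trans hS₁S₀ hs
    have hs1 : (1 : ℝ) ≤ s := le_trans hS₁1 hs
    have hg1 : r + 1 ≤ g s := le_trans (le_max_right _ _) (hgbig s hsS₀)
    have hIpos : 0 < ∫ τ in r..(g s), f τ := hFpos _ hg1
    have hIle : (∫ τ in r..(g s), f τ) ≤ s * s := by
      have h1 := hlin s hsS₀
      have hCE : C + |E| + 1 ≤ s := le_trans hS₁E hs
      have hEabs : E ≤ |E| := le_abs_self E
      have m1 : (C + |E| + 1) * s ≤ s * s := mul_le_mul_of_nonneg_right hCE (by linarith)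
      have m2 : 0 ≤ |E| * (s - 1) := mul_nonneg (abs_nonneg E) (by linarith)
      nlinarith [h1, hEabs, m1, m2]
    have hsqle : Real.sqrt (∫ τ in r..(g s), f τ) ≤ s :=
      le_trans (Real.sqrt_le_sqrt hIle) (le_of_eq (Real.sqrt_mul_self (by linarith)))
    have hsqpos : 0 < Real.sqrt (∫ τ in r..(g s), f τ) := Real.sqrt_pos.2 hIpos
    rw [inv_eq_one_div]
    exact one_div_le_one_div_of_le hsqpos hsqle
  have hginvr : ginv r ≤ S₁ := by
    have h1 : g (ginv r) ≤ g S₀ := by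
      rw [hinv2, hgS₀]
      exact le_trans (by linarith) (le_max_right _ _)
    exact le_trans (hgmono.le_iff_le.1 h1) hS₁S₀
  have H1 : IntegrableOn (fun s => 1 / Real.sqrt (∫ τ in r..(g s), f τ)) (Set.Ici S₁) :=
    H.mono_set (Set.Ici_subset_Ici.2 hginvr)
  have H2 : IntegrableOn (fun s : ℝ => s⁻¹) (Set.Ici S₁) := by
    apply MeasureTheory.Integrable.mono H1 measurable_inv.aestronglyMeasurable
    filter_upwards [ae_restrict_mem measurableSet_Ici] with s hs
    have hs' : S₁ ≤ s := hs
    have h0 : (0 : ℝ) < s := lt_of_lt_of_le (by linarith) hs'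
    rw [Real.norm_eq_abs, Real.norm_eq_abs, abs_of_pos (inv_pos.2 h0),
      abs_of_nonneg (by positivity)]
    exact hkey s hs'
  exact not_IntegrableOn_Ici_inv H2
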